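/- arXiv:1711.09211 — 2 statements merged into one kernel-verified Lean document; each statement's English description precedes it below -/
import Mathlib

section
/- For any simplicial map f: K → L between weighted simplicial complexes, the induced chain map f_♯ commutes with the weighted boundary maps: f_♯ ∂ = ∂ f_♯. -/
open Finset

/-- An abstract simplicial complex on a vertex type `V`. -/
structure SComplex (V : Type*) where
  faces : Set (Finset V)
  not_empty_mem : ∅ ∉ faces
  down_closed : ∀ {s t : Finset V}, s ∈ faces → t ⊆ s → t.Nonempty → t ∈ faces

/-- The `n`-dimensional simplices (cardinality `n+1`) of a complex. -/
def SComplex.SimplexOf {V : Type*} (K : SComplex V) (n : ℕ) : Type _ :=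
  {s : Finset V // s ∈ K.faces ∧ s.card = n + 1}

/-- The `i`-th face of an `(n+1)`-dimensional simplex: delete its `i`-th vertex
(vertices listed in increasing order). -/
noncomputable def SComplex.face {V : Type*} [LinearOrder V] (K : SComplex V) {n : ℕ}
    (σ : K.SimplexOf (n + 1)) (i : Fin (n + 2)) : K.SimplexOf n := by
  classical
  refine ⟨σ.1.erase (σ.1.orderEmbOfFin σ.2.2 i),
    K.down_closed σ.2.1 (Finset.erase_subset _ _) ?_, ?_⟩
  · rw [← Finset.card_pos, Finset.card_erase_of_mem (Finset.orderEmbOfFin_mem _ _ _), σ.2.2]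
    omega
  · simp [Finset.card_erase_of_mem (Finset.orderEmbOfFin_mem _ _ _), σ.2.2]

/-- The quotient `b / a` in a commutative ring, for `a ∣ b` (an arbitrary choice of
quotient; it is unique when the ring is an integral domain and `a ≠ 0`). -/
noncomputable def dquot {R : Type*} [CommRing R] (b a : R) : R :=
  open Classical in if h : a ∣ b then h.choose else 0

/-- The weighted boundary map `∂ₙ : Cₙ₊₁ → Cₙ` of a weighted simplicial complex `(K, w)`,
`∂ₙ σ = Σᵢ (w σ / w (dᵢ σ)) (-1)ⁱ dᵢ σ`, with coefficients pushed forward along a ring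
homomorphism `g : R →+* S` (take `g = RingHom.id R` for coefficients in `R` itself). -/
noncomputable def wbnd {V R S : Type*} [LinearOrder V] [CommRing R] [CommRing S]
    (g : R →+* S) (K : SComplex V) (w : Finset V → R) (n : ℕ) :
    (K.SimplexOf (n + 1) →₀ S) →ₗ[S] (K.SimplexOf n →₀ S) :=
  Finsupp.lsum S fun σ => LinearMap.toSpanSingleton S _
    (∑ i : Fin (n + 2),
      ((-1 : S) ^ (i : ℕ) * g (dquot (w σ.1) (w (K.face σ i).1))) •
        Finsupp.single (K.face σ i) (1 : S))

/-- The chain map induced by a simplicial map `f`: an oriented simplex `σ` is sent to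
`f(σ)` if `f` is injective on the vertices of `σ`, and to `0` otherwise. -/
noncomputable def fsharp {V V' S : Type*} [DecidableEq V'] [CommRing S]
    (K : SComplex V) (L : SComplex V') (f : V → V')
    (hf : ∀ s ∈ K.faces, (s.image f : Finset V') ∈ L.faces) (n : ℕ) :
    (K.SimplexOf n →₀ S) →ₗ[S] (L.SimplexOf n →₀ S) := by
  classical
  exact Finsupp.lsum S fun σ => LinearMap.toSpanSingleton S _
    (if h : (σ.1.image f).card = n + 1 then
      Finsupp.single (⟨σ.1.image f, hf σ.1 σ.2.1, h⟩ : L.SimplexOf n) (1 : S)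
    else 0)


section Helpers

lemma SComplex.face_val {V : Type*} [LinearOrder V] (K : SComplex V) {n : ℕ}
    (σ : K.SimplexOf (n + 1)) (i : Fin (n + 2)) :
    (K.face σ i).1 = σ.1.erase (σ.1.orderEmbOfFin σ.2.2 i) := rfl

lemma fsharp_single {V V' S : Type*} [DecidableEq V'] [CommRing S]
    (K : SComplex V) (L : SComplex V') (f : V → V')
    (hf : ∀ s ∈ K.faces, (s.image f : Finset V') ∈ L.faces) (n : ℕ)
    (σ : K.SimplexOf n) (b : S) :
    fsharp K L f hf n (Finsupp.single σ b) =
      b • (if h : (σ.1.image f).card = n + 1 then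
        Finsupp.single (⟨σ.1.image f, hf σ.1 σ.2.1, h⟩ : L.SimplexOf n) (1 : S)
      else 0) := by
  classical
  rw [fsharp, Finsupp.lsum_single, LinearMap.toSpanSingleton_apply]
  rfl

lemma wbnd_single {V R S : Type*} [LinearOrder V] [CommRing R] [CommRing S]
    (g : R →+* S) (K : SComplex V) (w : Finset V → R) (n : ℕ)
    (σ : K.SimplexOf (n + 1)) (b : S) :
    wbnd g K w n (Finsupp.single σ b) =
      b • ∑ i : Fin (n + 2),
        ((-1 : S) ^ (i : ℕ) * g (dquot (w σ.1) (w (K.face σ i).1))) •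
          Finsupp.single (K.face σ i) (1 : S) := by
  rw [wbnd, Finsupp.lsum_single, LinearMap.toSpanSingleton_apply]

lemma image_erase_of_injOn {V V' : Type*} [DecidableEq V] [DecidableEq V'] {f : V → V'}
    {t : Finset V} (hinj : Set.InjOn f t) {a : V} (ha : a ∈ t) :
    (t.erase a).image f = (t.image f).erase (f a) := by
  ext x
  simp only [Finset.mem_image, Finset.mem_erase]
  constructor
  · rintro ⟨y, ⟨hya, hyt⟩, rfl⟩
    exact ⟨fun h => hya (hinj hyt ha h), y, hyt, rfl⟩
  · rintro ⟨hx, y, hyt, rfl⟩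
    exact ⟨y, ⟨fun h => hx (by rw [h]), hyt⟩, rfl⟩

lemma image_erase_collision {V V' : Type*} [DecidableEq V] [DecidableEq V'] {f : V → V'}
    {t : Finset V} {a b : V} (ha : a ∈ t) (hab : a ≠ b) (hfab : f a = f b) :
    (t.erase a).image f ⊆ (t.erase b).image f := by
  intro x hx
  rw [Finset.mem_image] at hx ⊢
  obtain ⟨y, hy, rfl⟩ := hx
  rw [Finset.mem_erase] at hy
  by_cases hyb : y = b
  · exact ⟨a, Finset.mem_erase.2 ⟨hab, ha⟩, by rw [hfab, hyb]⟩
  · exact ⟨y, Finset.mem_erase.2 ⟨hyb, hy.2⟩, rfl⟩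

lemma card_image_le_of_collision {V V' : Type*} [DecidableEq V] [DecidableEq V'] {f : V → V'}
    {t : Finset V} {a b : V} (ha : a ∈ t) (hb : b ∈ t) (hab : a ≠ b) (hfab : f a = f b) :
    (t.image f).card ≤ t.card - 1 := by
  have h : t.image f = (t.erase a).image f := by
    apply Finset.Subset.antisymm
    · intro x hx
      rw [Finset.mem_image] at hx ⊢
      obtain ⟨y, hy, rfl⟩ := hx
      by_cases hya : y = a
      · exact ⟨b, Finset.mem_erase.2 ⟨Ne.symm hab, hb⟩, by rw [hya, hfab]⟩
      · exact ⟨y, Finset.mem_erase.2 ⟨hya, hy⟩, rfl⟩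
    · exact Finset.image_subset_image (Finset.erase_subset _ _)
  rw [h, ← Finset.card_erase_of_mem ha]
  exact Finset.card_image_le

end Helpers

/-- For a (monotone, weight-compatible) simplicial map `f : K → L`
between weighted simplicial complexes over an integral domain `R`, the induced chain map
`f♯` commutes with the weighted boundary maps: `f♯ ∂ = ∂ f♯`. -/
theorem fsharp_comm_weighted_boundary {V V' R : Type*} [LinearOrder V] [LinearOrder V'] [DecidableEq V']
    [CommRing R] [IsDomain R]
    (K : SComplex V) (L : SComplex V') (w : Finset V → R) (w' : Finset V' → R)
    (hw0 : ∀ s ∈ K.faces, w s ≠ 0) (hw0' : ∀ s ∈ L.faces, w' s ≠ 0)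
    (hdvd : ∀ {s t : Finset V}, s ∈ K.faces → t ∈ K.faces → t ⊆ s → w t ∣ w s)
    (hdvd' : ∀ {s t : Finset V'}, s ∈ L.faces → t ∈ L.faces → t ⊆ s → w' t ∣ w' s)
    (f : V → V') (hmono : Monotone f)
    (hf : ∀ s ∈ K.faces, (s.image f : Finset V') ∈ L.faces)
    (hcompat : ∀ s ∈ K.faces, w' (s.image f) = w s) (n : ℕ) :
    (fsharp K L f hf n).comp (wbnd (RingHom.id R) K w n) =
      (wbnd (RingHom.id R) L w' n).comp (fsharp K L f hf (n + 1)) := by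
  classical
  apply Finsupp.lhom_ext
  intro σ b
  set s := σ.1 with hs
  have hcard : s.card = n + 2 := σ.2.2
  set v : Fin (n + 2) ↪o V := s.orderEmbOfFin σ.2.2 with hv
  have hvmem : ∀ i, v i ∈ s := fun i => Finset.orderEmbOfFin_mem s σ.2.2 i
  rw [LinearMap.comp_apply, LinearMap.comp_apply, wbnd_single, fsharp_single]
  erw [LinearMap.map_smul, LinearMap.map_smul]
  congr 1
  rw [map_sum]
  simp only [map_smul, fsharp_single, one_smul, RingHom.id_apply]
  by_cases hc : (s.image f).card = n + 1 + 1
  · -- f is injective on σ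
    rw [dif_pos hc]
    set τ : L.SimplexOf (n + 1) := ⟨s.image f, hf s σ.2.1, hc⟩ with hτ
    erw [wbnd_single, one_smul]
    have hinj : Set.InjOn f ↑s := by
      apply Finset.card_image_iff.1
      rw [hc, hcard]
    have hfv : ∀ i, f (v i) = (s.image f).orderEmbOfFin hc i := by
      have hsm : StrictMono (fun i => f (v i)) := by
        intro a b hab
        have h1 : v a < v b := v.strictMono hab
        exact lt_of_le_of_ne (hmono h1.le) fun h => h1.ne (hinj (hvmem a) (hvmem b) h)
      have := Finset.orderEmbOfFin_unique hc
        (f := fun i => f (v i)) (fun i => Finset.mem_image_of_mem f (hvmem i)) hsm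
      exact fun i => congrFun this i
    have himg : ∀ i, ((K.face σ i).1).image f = (L.face τ i).1 := by
      intro i
      rw [SComplex.face_val, SComplex.face_val]
      rw [image_erase_of_injOn hinj (hvmem i), hfv i]
      ext x
      simp only [Finset.mem_erase]
      exact Iff.rfl
    refine Finset.sum_congr rfl fun i _ => ?_
    have hdc : (((K.face σ i).1).image f).card = n + 1 := by
      rw [himg i]; exact (L.face τ i).2.2
    rw [dif_pos hdc]
    have h1 : w' τ.1 = w s := hcompat s σ.2.1
    have h2 : w' (L.face τ i).1 = w (K.face σ i).1 := by
      rw [← himg i]; exact hcompat _ (K.face σ i).2.1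
    rw [h1, h2]
    congr 1
    exact congrArg (fun x => Finsupp.single x (1 : R)) (Subtype.ext (himg i))
  · -- f is not injective on σ: both sides vanish
    erw [dif_neg hc, map_zero]
    -- find an adjacent collision
    obtain ⟨j, hfj⟩ : ∃ j : Fin (n + 1), f (v j.castSucc) = f (v j.succ) := by
      by_contra hno
      push_neg at hno
      have hsm : StrictMono (fun i => f (v i)) := by
        apply Fin.strictMono_iff_lt_succ.2
        intro j
        exact lt_of_le_of_ne (hmono (v.monotone (Fin.castSucc_le_succ j))) (hno j)
      have hinj : Set.InjOn f ↑s := by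
        intro a ha b hb hab
        have hra : a ∈ Set.range (⇑v) := by
          rw [hv, Finset.range_orderEmbOfFin]; exact ha
        have hrb : b ∈ Set.range (⇑v) := by
          rw [hv, Finset.range_orderEmbOfFin]; exact hb
        obtain ⟨i, rfl⟩ := hra
        obtain ⟨k, rfl⟩ := hrb
        exact congrArg v (hsm.injective hab)
      exact hc (by rw [Finset.card_image_of_injOn hinj, hcard])
    set a := v j.castSucc with hadef
    set c := v j.succ with hcdef
    have hac : a ≠ c := (v.strictMono (Fin.castSucc_lt_succ (i := j))).ne
    have hpairne : j.castSucc ≠ j.succ := (Fin.castSucc_lt_succ (i := j)).ne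
    have hzero : ∀ i ∈ (Finset.univ : Finset (Fin (n + 2))),
        i ∉ ({j.castSucc, j.succ} : Finset (Fin (n + 2))) →
        ((-1 : R) ^ (i : ℕ) * dquot (w s) (w (K.face σ i).1)) •
          (if h : (((K.face σ i).1).image f).card = n + 1 then
            Finsupp.single (⟨((K.face σ i).1).image f,
              hf _ (K.face σ i).2.1, h⟩ : L.SimplexOf n) (1 : R)
          else 0) = 0 := by
      intro i _ hi
      simp only [Finset.mem_insert, Finset.mem_singleton, not_or] at hi
      have hane : a ≠ v i := fun h => hi.1 (v.injective h).symm
      have hcne : c ≠ v i := fun h => hi.2 (v.injective h).symm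
      have hmem_a : a ∈ s.erase (v i) := Finset.mem_erase.2 ⟨hane, hvmem _⟩
      have hmem_c : c ∈ s.erase (v i) := Finset.mem_erase.2 ⟨hcne, hvmem _⟩
      have hle : (((s.erase (v i)).image f)).card ≤ n := by
        have := card_image_le_of_collision hmem_a hmem_c hac hfj
        rwa [Finset.card_erase_of_mem (hvmem i), hcard] at this
      have hfvi : (K.face σ i).1 = s.erase (v i) := rfl
      rw [dif_neg (by rw [hfvi]; omega), smul_zero]
    erw [← Finset.sum_subset (Finset.subset_univ ({j.castSucc, j.succ} : Finset (Fin (n + 2)))) hzero,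
      Finset.sum_pair hpairne]
    have himg2 : (s.erase a).image f = (s.erase c).image f :=
      Finset.Subset.antisymm (image_erase_collision (hvmem _) hac hfj)
        (image_erase_collision (hvmem _) hac.symm hfj.symm)
    have hfca : (K.face σ j.castSucc).1 = s.erase a := rfl
    have hfcc : (K.face σ j.succ).1 = s.erase c := rfl
    have hwac : w (s.erase a) = w (s.erase c) := by
      have hfa : s.erase a ∈ K.faces := hfca ▸ (K.face σ j.castSucc).2.1
      have hfb : s.erase c ∈ K.faces := hfcc ▸ (K.face σ j.succ).2.1
      calc w (s.erase a) = w' ((s.erase a).image f) := (hcompat _ hfa).symm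
        _ = w' ((s.erase c).image f) := by rw [himg2]
        _ = w (s.erase c) := hcompat _ hfb
    by_cases hd : ((s.erase a).image f).card = n + 1
    · have hd' : ((s.erase c).image f).card = n + 1 := by rw [← himg2]; exact hd
      rw [dif_pos (show (((K.face σ j.castSucc).1).image f).card = n + 1 from hfca ▸ hd),
        dif_pos (show (((K.face σ j.succ).1).image f).card = n + 1 from hfcc ▸ hd')]
      have hsing : Finsupp.single (⟨((K.face σ j.castSucc).1).image f,
            hf _ (K.face σ j.castSucc).2.1, hfca ▸ hd⟩ : L.SimplexOf n) (1 : R) =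
          Finsupp.single (⟨((K.face σ j.succ).1).image f,
            hf _ (K.face σ j.succ).2.1, hfcc ▸ hd'⟩ : L.SimplexOf n) (1 : R) := by
        have hvv : ((K.face σ j.castSucc).1).image f = ((K.face σ j.succ).1).image f := by
          rw [hfca, hfcc]; exact himg2
        exact congrArg (fun x => Finsupp.single x (1 : R)) (Subtype.ext hvv)
      rw [hsing, ← add_smul]
      have hcoeff : (-1 : R) ^ ((j.castSucc : Fin (n+2)) : ℕ) * dquot (w s) (w (K.face σ j.castSucc).1) +
          (-1 : R) ^ ((j.succ : Fin (n+2)) : ℕ) * dquot (w s) (w (K.face σ j.succ).1) = 0 := by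
        rw [hfca, hfcc, hwac, Fin.coe_castSucc, Fin.val_succ, pow_succ]
        ring
      rw [hcoeff, zero_smul]
      rfl
    · have hd' : ¬((s.erase c).image f).card = n + 1 := by rw [← himg2]; exact hd
      rw [dif_neg (show ¬(((K.face σ j.castSucc).1).image f).card = n + 1 from hfca ▸ hd),
        dif_neg (show ¬(((K.face σ j.succ).1).image f).card = n + 1 from hfcc ▸ hd')]
      simp
      rfl
end

section
/- Let (K,w) be a finite WSC with all weights nonzero, over a field 𝔽 (weights in 𝔽 and coefficients in 𝔽). Then the weighted homology H_n(K,w;𝔽) is isomorphic to the ordinary simplicial homology H_n(K;𝔽) for all n. -/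
open Finset

/-- The weighted boundary map over a field `F`, with weight function `w : K → F`:
`∂_w σ = Σᵢ (w σ / w (dᵢ σ)) (-1)ⁱ dᵢ σ`.  Taking `w = 1` gives the ordinary
(unweighted) simplicial boundary map. -/
noncomputable def fbnd {V F : Type*} [LinearOrder V] [Field F]
    (K : SComplex V) (w : Finset V → F) (n : ℕ) :
    (K.SimplexOf (n + 1) →₀ F) →ₗ[F] (K.SimplexOf n →₀ F) :=
  Finsupp.lsum F fun σ => LinearMap.toSpanSingleton F _
    (∑ i : Fin (n + 2),
      ((-1 : F) ^ (i : ℕ) * (w σ.1 / w (K.face σ i).1)) •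
        Finsupp.single (K.face σ i) (1 : F))

/-- The cycles of the weighted chain complex over a field. -/
noncomputable def fZ {V F : Type*} [LinearOrder V] [Field F]
    (K : SComplex V) (w : Finset V → F) :
    (n : ℕ) → Submodule F (K.SimplexOf n →₀ F)
  | 0 => ⊤
  | n + 1 => LinearMap.ker (fbnd K w n)

/-- The weighted homology `Hₙ(K, w; F) = ker ∂_{w,n} / im ∂_{w,n+1}` over a field `F`. -/
noncomputable abbrev fH {V F : Type*} [LinearOrder V] [Field F]
    (K : SComplex V) (w : Finset V → F) (n : ℕ) :=
  letI : AddCommGroup ↥(fZ K w n) := inferInstance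
  fZ K w n ⧸ Submodule.comap (fZ K w n).subtype (LinearMap.range (fbnd K w n))


section AuxWH
set_option linter.unusedSectionVars false
variable {V F : Type*} [LinearOrder V] [Field F]

/-- Pointwise rescaling of chains by a coefficient function. -/
noncomputable def sclWH (K : SComplex V) (n : ℕ) (c : K.SimplexOf n → F) :
    (K.SimplexOf n →₀ F) →ₗ[F] (K.SimplexOf n →₀ F) :=
  Finsupp.lsum F fun σ => LinearMap.toSpanSingleton F _ (Finsupp.single σ (c σ))

lemma sclWH_single (K : SComplex V) (n : ℕ) (c : K.SimplexOf n → F) (σ : K.SimplexOf n) (a : F) :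
    sclWH K n c (Finsupp.single σ a) = Finsupp.single σ (a * c σ) := by
  simp [sclWH, LinearMap.toSpanSingleton_apply, Finsupp.smul_single]

/-- Rescaling by nonzero coefficients is a linear equivalence. -/
noncomputable def sclWHEquiv (K : SComplex V) (n : ℕ) (c : K.SimplexOf n → F)
    (hc : ∀ σ, c σ ≠ 0) : (K.SimplexOf n →₀ F) ≃ₗ[F] (K.SimplexOf n →₀ F) :=
  LinearEquiv.ofLinear (sclWH K n c) (sclWH K n fun σ => (c σ)⁻¹)
    (by
      apply Finsupp.lhom_ext; intro σ a
      simp only [LinearMap.comp_apply, sclWH_single, LinearMap.id_apply]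
      rw [mul_assoc, inv_mul_cancel₀ (hc σ), mul_one])
    (by
      apply Finsupp.lhom_ext; intro σ a
      simp only [LinearMap.comp_apply, sclWH_single, LinearMap.id_apply]
      rw [mul_assoc, mul_inv_cancel₀ (hc σ), mul_one])

lemma sclWHEquiv_apply (K : SComplex V) (n : ℕ) (c : K.SimplexOf n → F)
    (hc : ∀ σ, c σ ≠ 0) (x : K.SimplexOf n →₀ F) :
    sclWHEquiv K n c hc x = sclWH K n c x := rfl

lemma fbnd_single (K : SComplex V) (w : Finset V → F) (n : ℕ)
    (σ : K.SimplexOf (n + 1)) (a : F) :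
    fbnd K w n (Finsupp.single σ a) =
      a • ∑ i : Fin (n + 2),
        ((-1 : F) ^ (i : ℕ) * (w σ.1 / w (K.face σ i).1)) •
          Finsupp.single (K.face σ i) (1 : F) := by
  simp [fbnd, LinearMap.toSpanSingleton_apply]

/-- The key chain-map identity: rescaling by `w` intertwines the weighted boundary
with the ordinary one. -/
lemma sclWH_comm (K : SComplex V) (w : Finset V → F) (hw0 : ∀ s ∈ K.faces, w s ≠ 0) (n : ℕ) :
    (sclWH K n fun σ => w σ.1) ∘ₗ fbnd K w n =
      fbnd K (fun _ => (1 : F)) n ∘ₗ (sclWH K (n + 1) fun σ => w σ.1) := by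
  apply Finsupp.lhom_ext; intro σ a
  simp only [LinearMap.comp_apply, sclWH_single, fbnd_single, map_smul, map_sum, one_mul]
  rw [mul_smul a]
  congr 1
  rw [Finset.smul_sum]
  apply Finset.sum_congr rfl
  intro i _
  have h1 : w (K.face σ i).1 ≠ 0 := hw0 _ (K.face σ i).2.1
  rw [smul_smul, Finsupp.smul_single, Finsupp.smul_single]
  congr 1
  field_simp
  rw [smul_eq_mul, smul_eq_mul, div_mul_cancel₀ _ h1, mul_one]

/-- Convenience weight-coefficient equivalences. -/
noncomputable def eWH (K : SComplex V) (w : Finset V → F) (hw0 : ∀ s ∈ K.faces, w s ≠ 0)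
    (n : ℕ) : (K.SimplexOf n →₀ F) ≃ₗ[F] (K.SimplexOf n →₀ F) :=
  sclWHEquiv K n (fun σ => w σ.1) (fun σ => hw0 _ σ.2.1)

lemma eWH_comm (K : SComplex V) (w : Finset V → F) (hw0 : ∀ s ∈ K.faces, w s ≠ 0) (n : ℕ)
    (x : K.SimplexOf (n + 1) →₀ F) :
    eWH K w hw0 n (fbnd K w n x) = fbnd K (fun _ => (1 : F)) n (eWH K w hw0 (n + 1) x) := by
  have := sclWH_comm K w hw0 n
  exact DFunLike.congr_fun this x

lemma eWH_map_fZ (K : SComplex V) (w : Finset V → F) (hw0 : ∀ s ∈ K.faces, w s ≠ 0) (n : ℕ) :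
    (fZ K w n).map (eWH K w hw0 n).toLinearMap = fZ K (fun _ => (1 : F)) n := by
  cases n with
  | zero =>
    show Submodule.map _ ⊤ = (⊤ : Submodule F _)
    rw [Submodule.map_top, LinearEquiv.range]
  | succ m =>
    show Submodule.map _ (LinearMap.ker (fbnd K w m)) = LinearMap.ker (fbnd K (fun _ => (1:F)) m)
    ext y
    simp only [Submodule.mem_map, LinearMap.mem_ker]
    constructor
    · rintro ⟨x, hx, rfl⟩
      rw [LinearEquiv.coe_coe, ← eWH_comm K w hw0 m x, hx, map_zero]
    · intro hy
      refine ⟨(eWH K w hw0 (m+1)).symm y, ?_, by simp⟩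
      apply_fun eWH K w hw0 m
      · rw [eWH_comm K w hw0 m, LinearEquiv.apply_symm_apply, hy, map_zero]
      · exact (eWH K w hw0 m).injective

lemma eWH_map_range (K : SComplex V) (w : Finset V → F) (hw0 : ∀ s ∈ K.faces, w s ≠ 0) (n : ℕ) :
    (LinearMap.range (fbnd K w n)).map (eWH K w hw0 n).toLinearMap =
      LinearMap.range (fbnd K (fun _ => (1 : F)) n) := by
  ext y
  simp only [Submodule.mem_map, LinearMap.mem_range]
  constructor
  · rintro ⟨x, ⟨z, rfl⟩, rfl⟩
    exact ⟨eWH K w hw0 (n+1) z, (eWH_comm K w hw0 n z).symm⟩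
  · rintro ⟨z, rfl⟩
    exact ⟨fbnd K w n ((eWH K w hw0 (n+1)).symm z), ⟨_, rfl⟩, by
      rw [LinearEquiv.coe_coe, eWH_comm K w hw0 n, LinearEquiv.apply_symm_apply]⟩

end AuxWH

/-- Let `(K, w)` be a finite weighted simplicial complex with nonzero
weights in a field `F`.  Then the weighted homology `Hₙ(K, w; F)` is isomorphic to the
ordinary simplicial homology `Hₙ(K; F)` (weighted homology with constant weight `1`)
for all `n`. -/
theorem weighted_homology_iso_ordinary_over_field {V F : Type*} [LinearOrder V] [Field F]
    (K : SComplex V) (hfin : K.faces.Finite)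
    (w : Finset V → F) (hw0 : ∀ s ∈ K.faces, w s ≠ 0) (n : ℕ) :
    Nonempty (fH K w n ≃ₗ[F] fH K (fun _ => (1 : F)) n) := by
  classical
  set e := eWH K w hw0 n with he
  -- restrict e to an equivalence of cycle submodules
  have hmap := eWH_map_fZ K w hw0 n
  let eZ : (fZ K w n) ≃ₗ[F] (fZ K (fun _ => (1 : F)) n) :=
    LinearEquiv.ofSubmodules e (fZ K w n) (fZ K (fun _ => (1 : F)) n) hmap
  refine ⟨Submodule.Quotient.equiv _ _ eZ ?_⟩
  ext y
  simp only [Submodule.mem_map, Submodule.mem_comap, Submodule.coe_subtype]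
  constructor
  · rintro ⟨x, hx, rfl⟩
    have : (eZ x : K.SimplexOf n →₀ F) = e (x : K.SimplexOf n →₀ F) := rfl
    change e (x : K.SimplexOf n →₀ F) ∈ _
    rw [← eWH_map_range K w hw0 n]
    exact ⟨x, hx, rfl⟩
  · intro hy
    have hy' : (y : K.SimplexOf n →₀ F) ∈
        (LinearMap.range (fbnd K w n)).map (eWH K w hw0 n).toLinearMap := by
      rw [eWH_map_range K w hw0 n]; exact hy
    obtain ⟨x, hx, hxy⟩ := hy'
    have hxZ : x ∈ fZ K w n := by
      have : e x ∈ fZ K (fun _ => (1 : F)) n := by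
        rw [show (e x : K.SimplexOf n →₀ F) =
          (eWH K w hw0 n).toLinearMap x from rfl, hxy]
        exact y.2
      rw [← hmap] at this
      obtain ⟨x', hx', hx'e⟩ := this
      have : x' = x := e.injective hx'e
      rwa [← this]
    refine ⟨⟨x, hxZ⟩, hx, ?_⟩
    apply Subtype.ext
    exact hxy
end
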